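/- Let g ≥ 1. Over ℝ, the matrix M^+ has exactly two eigenvalues: 2^g, whose eigenspace has dimension (1/3)(2^g + 1)(2^{g−1} + 1), and −2^{g−1}, whose eigenspace has dimension (1/3)(2^{2g} − 1). -/

import Mathlib

open scoped BigOperators

/-- The quadratic form `Σ_{i=1}^g x_i x_{g+i}` on `𝔽_2^{2g}`, with `𝔽_2^{2g}`
realized as pairs `(x_1,…,x_g), (x_{g+1},…,x_{2g})`. -/
def Qf {g : ℕ} (x : (Fin g → ZMod 2) × (Fin g → ZMod 2)) : ZMod 2 :=
  ∑ i, x.1 i * x.2 i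

/-- The `4^g × 4^g` matrix `M(g)` with entry
`M_{m,n} = (−1)^{Σ_i (m_i n_{g+i} + n_i m_{g+i})}` (exponent computed using
the representatives in `{0,1}`). -/
def Mmat (g : ℕ) :
    Matrix ((Fin g → ZMod 2) × (Fin g → ZMod 2)) ((Fin g → ZMod 2) × (Fin g → ZMod 2)) ℝ :=
  fun m n => (-1 : ℝ) ^ (∑ i, ((m.1 i).val * (n.2 i).val + (n.1 i).val * (m.2 i).val))

/-- `M⁺`, the principal submatrix of `M(g)` indexed by `K_g^+ × K_g^+`. -/
def Mplus (g : ℕ) :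
    Matrix {x : (Fin g → ZMod 2) × (Fin g → ZMod 2) // Qf x = 0}
      {x : (Fin g → ZMod 2) × (Fin g → ZMod 2) // Qf x = 0} ℝ :=
  fun m n => Mmat g m.1 n.1

/-- `M⁻`, the principal submatrix of `M(g)` indexed by `K_g^− × K_g^−`. -/
def Mminus (g : ℕ) :
    Matrix {x : (Fin g → ZMod 2) × (Fin g → ZMod 2) // Qf x = 1}
      {x : (Fin g → ZMod 2) × (Fin g → ZMod 2) // Qf x = 1} ℝ :=
  fun m n => Mmat g m.1 n.1

/-- `N`, the submatrix of `M(g)` indexed by `K_g^+ × K_g^−`. -/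
def Nmat (g : ℕ) :
    Matrix {x : (Fin g → ZMod 2) × (Fin g → ZMod 2) // Qf x = 0}
      {x : (Fin g → ZMod 2) × (Fin g → ZMod 2) // Qf x = 1} ℝ :=
  fun m n => Mmat g m.1 n.1

noncomputable def chi (a : ZMod 2) : ℝ := (-1 : ℝ) ^ a.val

lemma val_zmod2_0 : (0 : ZMod 2).val = 0 := rfl
lemma val_zmod2_1 : (1 : ZMod 2).val = 1 := rfl
lemma val_zmod2_2 : (2 : ZMod 2).val = 0 := rfl

lemma chi_zero : chi 0 = 1 := by norm_num [chi, val_zmod2_0]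
lemma chi_one : chi 1 = -1 := by norm_num [chi, val_zmod2_1]

lemma zmod2_cases' (q : ZMod 2) : q = 0 ∨ q = 1 := by revert q; decide

lemma chi_add (a b : ZMod 2) : chi (a + b) = chi a * chi b := by
  rcases zmod2_cases' a with rfl | rfl <;> rcases zmod2_cases' b with rfl | rfl <;>
    norm_num [chi, val_zmod2_0, val_zmod2_1, val_zmod2_2]

lemma chi_natCast (n : ℕ) : chi (n : ZMod 2) = (-1 : ℝ) ^ n := by
  induction n with
  | zero => simp [chi_zero]
  | succ k ih => rw [Nat.cast_succ, chi_add, ih, chi_one, pow_succ]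

lemma chi_sum {ι : Type*} (s : Finset ι) (f : ι → ZMod 2) :
    chi (∑ i ∈ s, f i) = ∏ i ∈ s, chi (f i) := by
  induction s using Finset.cons_induction with
  | empty => simp [chi_zero]
  | cons a s ha ih => rw [Finset.sum_cons, Finset.prod_cons, chi_add, ih]

lemma sum_zmod2 (f : ZMod 2 → ℝ) : ∑ x, f x = f 0 + f 1 := by
  rw [show (Finset.univ : Finset (ZMod 2)) = {0, 1} from by decide]
  simp

lemma coordA (u v : ZMod 2) :
    ∑ p : ZMod 2 × ZMod 2, chi (u * p.2 + p.1 * v) =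
      if u = 0 ∧ v = 0 then 4 else 0 := by
  rw [Fintype.sum_prod_type]
  rcases zmod2_cases' u with rfl | rfl <;> rcases zmod2_cases' v with rfl | rfl <;>
    simp [sum_zmod2, chi_zero, chi_one, chi_add] <;> norm_num [chi]

lemma coordB (u v : ZMod 2) :
    ∑ p : ZMod 2 × ZMod 2, chi (u * p.2 + p.1 * v + p.1 * p.2) =
      2 * chi (u * v) := by
  rw [Fintype.sum_prod_type]
  rcases zmod2_cases' u with rfl | rfl <;> rcases zmod2_cases' v with rfl | rfl <;>
    simp [sum_zmod2, chi_zero, chi_one, chi_add] <;> norm_num [chi]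

abbrev Vt (g : ℕ) := (Fin g → ZMod 2) × (Fin g → ZMod 2)

def beta {g : ℕ} (x y : Vt g) : ZMod 2 :=
  ∑ i, (x.1 i * y.2 i + y.1 i * x.2 i)

lemma beta_symm {g : ℕ} (x y : Vt g) : beta x y = beta y x := by
  unfold beta; exact Finset.sum_congr rfl fun i _ => by ring

lemma beta_add_left {g : ℕ} (x y z : Vt g) :
    beta (x + y) z = beta x z + beta y z := by
  unfold beta
  rw [← Finset.sum_add_distrib]
  exact Finset.sum_congr rfl fun i _ => by
    simp only [Prod.fst_add, Prod.snd_add, Pi.add_apply]; ring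

lemma Qf_add {g : ℕ} (x y : Vt g) :
    Qf (x + y) = Qf x + Qf y + beta x y := by
  unfold Qf beta
  rw [← Finset.sum_add_distrib, ← Finset.sum_add_distrib]
  exact Finset.sum_congr rfl fun i _ => by
    simp only [Prod.fst_add, Prod.snd_add, Pi.add_apply]; ring

lemma Mmat_eq {g : ℕ} (x y : Vt g) : Mmat g x y = chi (beta x y) := by
  unfold Mmat beta
  rw [← chi_natCast]
  congr 1
  push_cast [ZMod.natCast_val, ZMod.cast_id]
  rfl

def eVt (g : ℕ) : (Fin g → ZMod 2 × ZMod 2) ≃ Vt g :=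
  ⟨fun K => (fun i => (K i).1, fun i => (K i).2), fun y i => (y.1 i, y.2 i),
    fun K => rfl, fun y => rfl⟩

lemma sumA {g : ℕ} (x : Vt g) :
    ∑ k : Vt g, chi (beta x k) = if x = 0 then (4 : ℝ) ^ g else 0 := by
  rw [← (eVt g).sum_comp]
  have step : ∀ K : Fin g → ZMod 2 × ZMod 2,
      chi (beta x (eVt g K)) = ∏ i, chi (x.1 i * (K i).2 + (K i).1 * x.2 i) := by
    intro K
    simp only [beta, eVt, Equiv.coe_fn_mk]
    rw [chi_sum]
  simp only [step]
  rw [← Fintype.prod_sum (fun (i : Fin g) (p : ZMod 2 × ZMod 2) =>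
    chi (x.1 i * p.2 + p.1 * x.2 i))]
  simp only [coordA]
  by_cases hx : x = 0
  · subst hx
    simp
  · rw [if_neg hx]
    have : ∃ i, ¬ (x.1 i = 0 ∧ x.2 i = 0) := by
      by_contra h
      push_neg at h
      apply hx
      ext i
      · exact (h i).1
      · exact (h i).2
    obtain ⟨i, hi⟩ := this
    exact Finset.prod_eq_zero (Finset.mem_univ i) (by rw [if_neg hi])

lemma sumB {g : ℕ} (x : Vt g) :
    ∑ k : Vt g, chi (beta x k + Qf k) = (2 : ℝ) ^ g * chi (Qf x) := by
  rw [← (eVt g).sum_comp]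
  have step : ∀ K : Fin g → ZMod 2 × ZMod 2,
      chi (beta x (eVt g K) + Qf (eVt g K)) =
        ∏ i, chi (x.1 i * (K i).2 + (K i).1 * x.2 i + (K i).1 * (K i).2) := by
    intro K
    simp only [beta, Qf, eVt, Equiv.coe_fn_mk, ← Finset.sum_add_distrib]
    rw [chi_sum]
  simp only [step]
  rw [← Fintype.prod_sum (fun (i : Fin g) (p : ZMod 2 × ZMod 2) =>
    chi (x.1 i * p.2 + p.1 * x.2 i + p.1 * p.2))]
  simp only [coordB]
  rw [Finset.prod_mul_distrib, Finset.prod_const, ← chi_sum]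
  simp [Qf, Finset.card_univ]

lemma zmod2_cases (q : ZMod 2) : q = 0 ∨ q = 1 := by exact zmod2_cases' q

lemma sum_subtype_chi {g : ℕ} (x : Vt g) :
    ∑ k : {y : Vt g // Qf y = 0}, chi (beta x k.1) =
      ((if x = 0 then (4 : ℝ) ^ g else 0) + (2 : ℝ) ^ g * chi (Qf x)) / 2 := by
  have h1 : (∑ k ∈ Finset.univ.filter (fun y : Vt g => Qf y = 0), chi (beta x k)) =
      ∑ k : {y : Vt g // Qf y = 0}, chi (beta x k.1) :=
    Finset.sum_subtype _ (fun y => by simp) _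
  rw [← h1, Finset.sum_filter]
  have h2 : ∀ k : Vt g, (if Qf k = 0 then chi (beta x k) else 0) =
      (chi (beta x k) + chi (beta x k + Qf k)) / 2 := by
    intro k
    rcases zmod2_cases (Qf k) with h | h <;> rw [h]
    · rw [if_pos rfl, add_zero]; ring
    · rw [if_neg one_ne_zero, chi_add, chi_one]; ring
  simp only [h2]
  rw [← Finset.sum_div, Finset.sum_add_distrib, sumA, sumB]

lemma beta_self {g : ℕ} (x : Vt g) : beta x x = 0 := by
  unfold beta
  rw [Finset.sum_eq_zero]
  intro i _
  rw [mul_comm (x.1 i)]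
  exact CharTwo.add_self_eq_zero _

lemma vadd_self {g : ℕ} (z : Vt g) : z + z = 0 := by
  apply Prod.ext <;> funext i <;>
    simp only [Prod.fst_add, Prod.snd_add, Pi.add_apply, Prod.fst_zero, Prod.snd_zero,
      Pi.zero_apply] <;> exact CharTwo.add_self_eq_zero _

lemma add_eq_zero_iff_eq {g : ℕ} (x y : Vt g) : x + y = 0 ↔ x = y := by
  constructor
  · intro h
    have h2 := congrArg (· + y) h
    simpa [add_assoc, vadd_self] using h2
  · rintro rfl
    exact vadd_self x

lemma Mplus_sq (g : ℕ) (hg : 1 ≤ g) :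
    Mplus g * Mplus g =
      (2 : ℝ) ^ (g - 1) • Mplus g + (2 : ℝ) ^ (2 * g - 1) • 1 := by
  ext m n
  rw [Matrix.mul_apply]
  have key : ∀ k : {x : Vt g // Qf x = 0},
      Mplus g m k * Mplus g k n = chi (beta (m.1 + n.1) k.1) := by
    intro k
    unfold Mplus
    rw [Mmat_eq, Mmat_eq, ← chi_add, beta_add_left, beta_symm k.1 n.1]
  simp only [key]
  rw [sum_subtype_chi (m.1 + n.1)]
  have hQ : Qf (m.1 + n.1) = beta m.1 n.1 := by
    rw [Qf_add, m.2, n.2, zero_add, zero_add]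
  have hmn : m.1 + n.1 = 0 ↔ m = n := by
    rw [add_eq_zero_iff_eq, Subtype.ext_iff]
  have h4 : (4 : ℝ) ^ g = 2 ^ (2 * g - 1) * 2 := by
    rw [show (4:ℝ) = 2^2 by norm_num, ← pow_mul, ← pow_succ]
    congr 1
    omega
  have h2 : (2 : ℝ) ^ g = 2 ^ (g - 1) * 2 := by
    rw [← pow_succ]
    congr 1
    omega
  rw [hQ]
  simp only [Matrix.add_apply, Matrix.smul_apply, Matrix.one_apply, Mplus, Mmat_eq,
    smul_eq_mul]
  by_cases h : m = n
  · rw [if_pos (hmn.mpr h), if_pos h, h, beta_self, chi_zero, h4, h2]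
    ring
  · rw [if_neg (fun hc => h (hmn.mp hc)), if_neg h, h2]
    ring

lemma trace_mulVecLin {n : Type*} [Fintype n] [DecidableEq n] (A : Matrix n n ℝ) :
    LinearMap.trace ℝ (n → ℝ) (Matrix.mulVecLin A) = Matrix.trace A := by
  rw [← Matrix.toLin'_apply', LinearMap.trace_eq_matrix_trace ℝ (Pi.basisFun ℝ n),
    LinearMap.toMatrix_eq_toMatrix', LinearMap.toMatrix'_toLin']

lemma mulVecLin_smul {n : Type*} [Fintype n] (r : ℝ) (A : Matrix n n ℝ) :
    Matrix.mulVecLin (r • A) = r • Matrix.mulVecLin A := by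
  ext v i
  simp [Matrix.mulVecLin_apply, Matrix.smul_mulVec]

lemma chi_sq (q : ZMod 2) : chi q * chi q = 1 := by
  rcases zmod2_cases q with h | h <;> rw [h] <;> norm_num [chi_zero, chi_one]

lemma trace_Mplus (g : ℕ) :
    Matrix.trace (Mplus g) = (Fintype.card {x : Vt g // Qf x = 0} : ℝ) := by
  rw [Matrix.trace]
  have : ∀ m : {x : Vt g // Qf x = 0}, Matrix.diag (Mplus g) m = 1 := by
    intro m
    show Mplus g m m = 1
    unfold Mplus
    rw [Mmat_eq, beta_self, chi_zero]
  simp only [this]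
  rw [Finset.sum_const, Finset.card_univ, nsmul_eq_mul, mul_one]

lemma trace_Mplus_sq (g : ℕ) :
    Matrix.trace (Mplus g * Mplus g) =
      (Fintype.card {x : Vt g // Qf x = 0} : ℝ) ^ 2 := by
  rw [Matrix.trace]
  have : ∀ m : {x : Vt g // Qf x = 0}, Matrix.diag (Mplus g * Mplus g) m =
      (Fintype.card {x : Vt g // Qf x = 0} : ℝ) := by
    intro m
    show (Mplus g * Mplus g) m m = _
    rw [Matrix.mul_apply]
    have e : ∀ k, Mplus g m k * Mplus g k m = 1 := by
      intro k
      unfold Mplus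
      rw [Mmat_eq, Mmat_eq, beta_symm k.1 m.1, chi_sq]
    simp only [e]
    rw [Finset.sum_const, Finset.card_univ, nsmul_eq_mul, mul_one]
  simp only [this]
  rw [Finset.sum_const, Finset.card_univ, nsmul_eq_mul, sq]

lemma card_Kplus (g : ℕ) (hg : 1 ≤ g) :
    (Fintype.card {x : Vt g // Qf x = 0} : ℝ) = 2 ^ (2 * g - 1) + 2 ^ (g - 1) := by
  have h0 : (0 : ℝ) < (Fintype.card {x : Vt g // Qf x = 0} : ℝ) := by
    have : 0 < Fintype.card {x : Vt g // Qf x = 0} :=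
      Fintype.card_pos_iff.mpr ⟨⟨0, by simp [Qf]⟩⟩
    exact_mod_cast this
  have h1 := trace_Mplus_sq g
  rw [Mplus_sq g hg, Matrix.trace_add, Matrix.trace_smul, Matrix.trace_smul,
    Matrix.trace_one, trace_Mplus] at h1
  set N := (Fintype.card {x : Vt g // Qf x = 0} : ℝ)
  simp only [smul_eq_mul] at h1
  have : N * N = (2 ^ (2*g-1) + 2 ^ (g-1)) * N := by rw [← sq, ← h1]; ring
  exact mul_right_cancel₀ (ne_of_gt h0) this


set_option maxHeartbeats 1000000 in
/-- `M⁺` has exactly two eigenvalues: `2^g` with eigenspace of dimension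
`(1/3)(2^g+1)(2^{g−1}+1)`, and `−2^{g−1}` with eigenspace of dimension
`(1/3)(2^{2g}−1)`. -/
theorem Mplus_eigenvalues (g : ℕ) (hg : 1 ≤ g) :
    Module.End.HasEigenvalue (Matrix.mulVecLin (Mplus g)) ((2 : ℝ) ^ g) ∧
      Module.End.HasEigenvalue (Matrix.mulVecLin (Mplus g)) (-(2 : ℝ) ^ (g - 1)) ∧
      (∀ μ : ℝ, Module.End.HasEigenvalue (Matrix.mulVecLin (Mplus g)) μ →
        μ = (2 : ℝ) ^ g ∨ μ = -(2 : ℝ) ^ (g - 1)) ∧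
      3 * Module.finrank ℝ
          (Module.End.eigenspace (Matrix.mulVecLin (Mplus g)) ((2 : ℝ) ^ g)) =
        (2 ^ g + 1) * (2 ^ (g - 1) + 1) ∧
      3 * Module.finrank ℝ
          (Module.End.eigenspace (Matrix.mulVecLin (Mplus g)) (-(2 : ℝ) ^ (g - 1))) =
        2 ^ (2 * g) - 1 := by
  classical
  set f : Module.End ℝ ({x : Vt g // Qf x = 0} → ℝ) := Matrix.mulVecLin (Mplus g) with hf
  set c : ℝ := 2 ^ (g - 1) with hc
  have hcpos : (0:ℝ) < c := by positivity
  have hcne : c ≠ 0 := ne_of_gt hcpos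
  have h3cne : (3:ℝ) * c ≠ 0 := by positivity
  have h2g : (2:ℝ) ^ g = 2 * c := by
    rw [hc, ← pow_succ']
    congr 1
    omega
  have h2g1 : (2:ℝ) ^ (2*g-1) = 2 * c * c := by
    rw [hc, show 2*g-1 = 1+(g-1)+(g-1) by omega, pow_add, pow_add, pow_one]
  have h4c : (2:ℝ) ^ (2*g) = 2 * c * (2 * c) := by
    rw [hc, show 2*g = (1+(g-1))+(1+(g-1)) by omega, pow_add, pow_add]
    norm_num
  -- the quadratic relation
  have hquad : f * f = c • f + (2*c*c) • (1 : Module.End ℝ ({x : Vt g // Qf x = 0} → ℝ)) := by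
    have h := congrArg Matrix.mulVecLin (Mplus_sq g hg)
    rw [Matrix.mulVecLin_mul, Matrix.mulVecLin_add, mulVecLin_smul, mulVecLin_smul,
      Matrix.mulVecLin_one] at h
    rw [h2g1] at h
    rw [Module.End.mul_eq_comp, Module.End.one_eq_id]
    exact h
  have expand : ∀ p q : ℝ, (f + p • 1) * (f + q • 1) =
      f * f + (p+q) • f + (p*q) • (1 : Module.End ℝ ({x : Vt g // Qf x = 0} → ℝ)) := by
    intro p q
    simp only [add_mul, mul_add, smul_mul_assoc, mul_smul_comm, one_mul, mul_one, smul_smul]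
    module
  have key1 : (f + (-(2*c)) • 1) * (f + c • 1) = 0 := by
    rw [expand, hquad]
    match_scalars <;> ring
  have key2 : (f + c • 1) * (f + (-(2*c)) • 1) = 0 := by
    rw [expand, hquad]
    match_scalars <;> ring
  -- eigenvector equation helper
  have happ : ∀ (p : ℝ) (v : {x : Vt g // Qf x = 0} → ℝ), (f + p • 1) v = f v + p • v := by
    intro p v
    rw [LinearMap.add_apply, LinearMap.smul_apply, Module.End.one_apply]
  -- restriction of eigenvalues
  have hrestrict : ∀ μ : ℝ, Module.End.HasEigenvalue f μ → μ = 2*c ∨ μ = -c := by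
    intro μ hμ
    obtain ⟨v, hv⟩ := hμ.exists_hasEigenvector
    have hfv : f v = μ • v := hv.apply_eq_smul
    have h0 : ((f + (-(2*c)) • 1) * (f + c • 1)) v = 0 := by rw [key1]; rfl
    rw [Module.End.mul_apply] at h0
    have hw : (f + c • 1) v = (μ + c) • v := by rw [happ, hfv, ← add_smul]
    rw [hw, happ, map_smul, hfv, smul_smul, smul_smul, ← add_smul] at h0
    rcases smul_eq_zero.mp h0 with h | h
    · have hfac : (μ + c) * (μ - 2*c) = 0 := by linear_combination h
      rcases mul_eq_zero.mp hfac with h' | h'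
      · right; linarith
      · left; linarith
    · exact absurd h hv.right
  -- projections
  set Ea := Module.End.eigenspace f (2*c) with hEa
  set Eb := Module.End.eigenspace f (-c) with hEb
  obtain ⟨P, hP⟩ : ∃ P : Module.End ℝ ({x : Vt g // Qf x = 0} → ℝ),
      P = (3*c)⁻¹ • (f + c • 1) := ⟨_, rfl⟩
  obtain ⟨P', hP'⟩ : ∃ P' : Module.End ℝ ({x : Vt g // Qf x = 0} → ℝ),
      P' = (3*c)⁻¹ • ((2*c) • 1 - f) := ⟨_, rfl⟩
  have hProjA : LinearMap.IsProj Ea P := by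
    constructor
    · intro x
      rw [hEa, Module.End.mem_eigenspace_iff]
      have h0 : ((f + (-(2*c)) • 1) * (f + c • 1)) x = 0 := by rw [key1]; rfl
      rw [Module.End.mul_apply, happ] at h0
      have hfw : f ((f + c • 1) x) = (2*c) • ((f + c • 1) x) := by
        have h1 := congrArg (fun z => z + (2*c) • ((f + c • 1) x)) h0
        simpa [add_assoc, neg_smul, add_smul] using h1
      rw [hP, LinearMap.smul_apply, map_smul, hfw, smul_comm]
    · intro x hx
      rw [hEa, Module.End.mem_eigenspace_iff] at hx
      rw [hP, LinearMap.smul_apply, happ, hx]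
      have h1 : (2*c) • x + c • x = (3*c) • x := by module
      rw [h1, smul_smul, inv_mul_cancel₀ h3cne, one_smul]
  have hProjB : LinearMap.IsProj Eb P' := by
    constructor
    · intro x
      rw [hEb, Module.End.mem_eigenspace_iff]
      have h0 : ((f + c • 1) * (f + (-(2*c)) • 1)) x = 0 := by rw [key2]; rfl
      rw [Module.End.mul_apply, happ] at h0
      have hfw : f ((f + (-(2*c)) • 1) x) = (-c) • ((f + (-(2*c)) • 1) x) := by
        have h1 := congrArg (fun z => z + (-c) • ((f + (-(2*c)) • 1) x)) h0
        simpa [add_assoc, neg_smul, add_smul] using h1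
      have hrw : P' x = (-(3*c)⁻¹) • ((f + (-(2*c)) • 1) x) := by
        rw [hP', LinearMap.smul_apply, LinearMap.sub_apply, LinearMap.smul_apply,
          Module.End.one_apply, happ]
        module
      rw [hrw, map_smul, hfw, smul_comm]
    · intro x hx
      rw [hEb, Module.End.mem_eigenspace_iff] at hx
      rw [hP', LinearMap.smul_apply, LinearMap.sub_apply, LinearMap.smul_apply,
        Module.End.one_apply, hx]
      have h1 : (2*c) • x - (-c) • x = (3*c) • x := by module
      rw [h1, smul_smul, inv_mul_cancel₀ h3cne, one_smul]
  -- trace identities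
  have hPsum : P + P' = 1 := by
    rw [hP, hP']
    match_scalars <;> (field_simp; try ring)
  have hfcomb : (2*c) • P + (-c) • P' = f := by
    rw [hP, hP']
    match_scalars <;> (field_simp; try ring)
  have tP : LinearMap.trace ℝ _ P = (Module.finrank ℝ Ea : ℝ) := hProjA.trace
  have tP' : LinearMap.trace ℝ _ P' = (Module.finrank ℝ Eb : ℝ) := hProjB.trace
  have hNval : Matrix.trace (Mplus g) = 2*c*c + c := by
    rw [trace_Mplus, card_Kplus g hg, h2g1, ← hc]
  have tsm1 : LinearMap.trace ℝ ({x : Vt g // Qf x = 0} → ℝ) ((2*c) • P)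
      = (2*c) • LinearMap.trace ℝ _ P := map_smul _ _ _
  have tsm2 : LinearMap.trace ℝ ({x : Vt g // Qf x = 0} → ℝ) ((-c) • P')
      = (-c) • LinearMap.trace ℝ _ P' := map_smul _ _ _
  have e2 : (2*c) * (Module.finrank ℝ Ea : ℝ) + (-c) * (Module.finrank ℝ Eb : ℝ)
      = 2*c*c + c := by
    have h1 := congrArg (LinearMap.trace ℝ ({x : Vt g // Qf x = 0} → ℝ)) hfcomb
    rw [map_add, tsm1, tsm2, tP, tP', hf, trace_mulVecLin, hNval] at h1
    simpa [smul_eq_mul] using h1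
  have e1 : (Module.finrank ℝ Ea : ℝ) + (Module.finrank ℝ Eb : ℝ) = 2*c*c + c := by
    have h1 := congrArg (LinearMap.trace ℝ ({x : Vt g // Qf x = 0} → ℝ)) hPsum
    rw [map_add, tP, tP', LinearMap.trace_one] at h1
    rw [h1, Module.finrank_pi ℝ]
    rw [show ((Fintype.card {x : Vt g // Qf x = 0} : ℕ) : ℝ)
      = 2 ^ (2*g-1) + 2 ^ (g-1) from card_Kplus g hg, h2g1, ← hc]
  have hdA : 3 * (Module.finrank ℝ Ea : ℝ) = (2*c+1)*(c+1) :=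
    mul_left_cancel₀ hcne (show c * (3 * (Module.finrank ℝ Ea : ℝ))
        = c * ((2*c+1)*(c+1)) by linear_combination e2 + c * e1)
  have hdB : 3 * (Module.finrank ℝ Eb : ℝ) = (2*c)*(2*c) - 1 :=
    mul_left_cancel₀ hcne (show c * (3 * (Module.finrank ℝ Eb : ℝ))
        = c * ((2*c)*(2*c) - 1) by linear_combination 2*c*e1 - e2 - e1 + e1)
  -- conclusions
  have hApos : Ea ≠ ⊥ := by
    intro hbot
    rw [hbot, finrank_bot] at hdA
    norm_num at hdA
    rcases hdA with h | h <;> nlinarith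
  have hBpos : Eb ≠ ⊥ := by
    intro hbot
    rw [hbot, finrank_bot] at hdB
    norm_num at hdB
    have hc1 : (1:ℝ) ≤ c := by
      rw [hc]
      exact one_le_pow₀ (by norm_num)
    nlinarith
  refine ⟨?_, ?_, ?_, ?_, ?_⟩
  · rw [h2g]
    exact Module.End.hasEigenvalue_iff.mpr hApos
  · exact Module.End.hasEigenvalue_iff.mpr hBpos
  · intro μ hμ
    rcases hrestrict μ hμ with h | h
    · left; rw [h, h2g]
    · right; rw [h]
  · have h1 : ((3 * Module.finrank ℝ Ea : ℕ) : ℝ)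
        = (((2 ^ g + 1) * (2 ^ (g - 1) + 1) : ℕ) : ℝ) := by
      push_cast
      rw [h2g, ← hc, hdA]
      try ring
    rw [hEa, ← h2g] at h1
    exact_mod_cast h1
  · have h1le : (1:ℕ) ≤ 2 ^ (2*g) := Nat.one_le_two_pow
    have h1 : ((3 * Module.finrank ℝ Eb : ℕ) : ℝ) = ((2 ^ (2*g) - 1 : ℕ) : ℝ) := by
      rw [Nat.cast_sub h1le]
      push_cast
      rw [h4c, hdB]
      try ring
    rw [hEb] at h1
    exact_mod_cast h1
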